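/- For odd n, the n-vertex hypergraph whose hyperedges are all subsets of [n] containing at most one vertex from {1,...,(n+1)/2} has minimum degree 2^((n-1)/2) and contains no Berge Hamiltonian cycle. -/

import Mathlib

/-- The degree of a vertex `v` in a hypergraph `H`: the number of hyperedges containing `v`. -/
def hDegree {V : Type*} [DecidableEq V] (H : Finset (Finset V)) (v : V) : ℕ :=
  (H.filter (fun e => v ∈ e)).card

/-- `H` has a Berge cycle of length `ℓ`: there are `ℓ` distinct vertices `v i` and `ℓ`
distinct hyperedges `e i` with `v i, v (i+1) ∈ e i` (cyclically). -/
def HasBergeCycle {V : Type*} (H : Finset (Finset V)) (ℓ : ℕ) : Prop :=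
  ∃ (v : Fin ℓ → V) (e : Fin ℓ → Finset V),
    Function.Injective v ∧ Function.Injective e ∧ (∀ i, e i ∈ H) ∧
    ∀ i : Fin ℓ, v i ∈ e i ∧ v ⟨(i.1 + 1) % ℓ, Nat.mod_lt _ i.pos⟩ ∈ e i

/-- `H` has a Berge Hamiltonian cycle: a Berge cycle whose representative vertices
are all the vertices. -/
def HasBergeHamCycle {V : Type*} [Fintype V] (H : Finset (Finset V)) : Prop :=
  ∃ (v : Fin (Fintype.card V) → V) (e : Fin (Fintype.card V) → Finset V),
    Function.Bijective v ∧ Function.Injective e ∧ (∀ i, e i ∈ H) ∧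
    ∀ i : Fin (Fintype.card V),
      v i ∈ e i ∧ v ⟨(i.1 + 1) % Fintype.card V, Nat.mod_lt _ i.pos⟩ ∈ e i

/-- Sharpness example, odd `n`: the hypergraph on `Fin n` whose hyperedges are all sets
containing at most one vertex from the first `(n+1)/2` vertices has minimum degree
`2^((n-1)/2)` and no Berge Hamiltonian cycle. -/
theorem stmt_12 (n : ℕ) (hodd : Odd n) (hn : 3 ≤ n) :
    (∀ v : Fin n, 2 ^ ((n - 1) / 2) ≤
      hDegree ((Finset.univ : Finset (Finset (Fin n))).filter
        (fun A : Finset (Fin n) => (A.filter (fun i : Fin n => (i : ℕ) < (n + 1) / 2)).card ≤ 1)) v) ∧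
    (∃ v : Fin n, hDegree ((Finset.univ : Finset (Finset (Fin n))).filter
        (fun A : Finset (Fin n) => (A.filter (fun i : Fin n => (i : ℕ) < (n + 1) / 2)).card ≤ 1)) v
      = 2 ^ ((n - 1) / 2)) ∧
    ¬ HasBergeHamCycle ((Finset.univ : Finset (Finset (Fin n))).filter
        (fun A : Finset (Fin n) => (A.filter (fun i : Fin n => (i : ℕ) < (n + 1) / 2)).card ≤ 1)) := by
  classical
  obtain ⟨k, hk⟩ := hodd
  have hk1 : 1 ≤ k := by omega
  have hk2 : (n - 1) / 2 = k := by omega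
  set m : ℕ := (n + 1) / 2 with hmdef
  have hmk : m = k + 1 := by omega
  set H : Finset (Finset (Fin n)) := (Finset.univ : Finset (Finset (Fin n))).filter
      (fun A : Finset (Fin n) => (A.filter (fun i : Fin n => (i : ℕ) < m)).card ≤ 1) with hH
  set T : Finset (Fin n) := Finset.univ.filter (fun i : Fin n => ¬ (i : ℕ) < m) with hT
  have hTcard : T.card = k := by
    have hE : T = Finset.Ici (⟨k + 1, by omega⟩ : Fin n) := by
      ext i
      simp [hT, Fin.le_def, hmk]
    rw [hE, Fin.card_Ici]
    simp
    omega
  have hmemH : ∀ A : Finset (Fin n),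
      A ∈ H ↔ (A.filter (fun i : Fin n => (i : ℕ) < m)).card ≤ 1 := by
    intro A; simp [hH]
  -- exact degree for vertices in the first half
  have key : ∀ v : Fin n, (v : ℕ) < m →
      H.filter (fun e => v ∈ e) = T.powerset.image (insert v) := by
    intro v hv
    ext A
    simp only [Finset.mem_filter, Finset.mem_image, Finset.mem_powerset]
    constructor
    · rintro ⟨hAH, hvA⟩
      rw [hmemH] at hAH
      refine ⟨A.filter (fun i : Fin n => ¬ (i : ℕ) < m), ?_, ?_⟩
      · intro x hx
        simp only [Finset.mem_filter] at hx
        simp only [hT, Finset.mem_filter, Finset.mem_univ, true_and]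
        exact hx.2
      · ext x
        simp only [Finset.mem_insert, Finset.mem_filter]
        constructor
        · rintro (rfl | ⟨hxA, _⟩) <;> [exact hvA; exact hxA]
        · intro hxA
          by_cases hxv : x = v
          · exact Or.inl hxv
          · refine Or.inr ⟨hxA, ?_⟩
            intro hxm
            have hsub : ({x, v} : Finset (Fin n)) ⊆ A.filter (fun i : Fin n => (i : ℕ) < m) := by
              intro y hy
              simp only [Finset.mem_insert, Finset.mem_singleton] at hy
              rcases hy with rfl | rfl <;> simp [Finset.mem_filter, hxA, hvA, hxm, hv]
            have h2 : ({x, v} : Finset (Fin n)).card = 2 := Finset.card_pair hxv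
            have := Finset.card_le_card hsub
            omega
    · rintro ⟨B, hB, rfl⟩
      refine ⟨?_, Finset.mem_insert_self _ _⟩
      rw [hmemH]
      have hsub : (insert v B).filter (fun i : Fin n => (i : ℕ) < m) ⊆ {v} := by
        intro x hx
        simp only [Finset.mem_filter, Finset.mem_insert] at hx
        rcases hx.1 with rfl | hxB
        · simp
        · exfalso
          have := hB hxB
          simp [hT] at this
          omega
      have := Finset.card_le_card hsub
      simpa using this
  have deg_eq : ∀ v : Fin n, (v : ℕ) < m → hDegree H v = 2 ^ k := by
    intro v hv
    rw [hDegree, key v hv, Finset.card_image_of_injOn, Finset.card_powerset, hTcard]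
    intro A hA B hB hAB
    simp only [Finset.mem_coe, Finset.mem_powerset] at hA hB
    have hvA : v ∉ A := by
      intro h
      have := hA h
      simp [hT] at this
      omega
    have hvB : v ∉ B := by
      intro h
      have := hB h
      simp [hT] at this
      omega
    rw [← Finset.erase_insert hvA, ← Finset.erase_insert hvB, hAB]
  -- lower bound for vertices in the second half
  have deg_ge : ∀ v : Fin n, ¬ (v : ℕ) < m → 2 ^ k ≤ hDegree H v := by
    intro v hv
    set w : Fin n := ⟨0, by omega⟩ with hw
    have hwm : (w : ℕ) < m := by simp [hw]; omega
    have hwT : w ∉ T := by simp [hT]; omega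
    set f : Finset (Fin n) → Finset (Fin n) :=
      fun B => if v ∈ B then insert w B else insert v B with hf
    have hsub : ∀ (x : Fin n) (B : Finset (Fin n)), B ⊆ T →
        ((insert x B).filter (fun i : Fin n => (i : ℕ) < m)) ⊆ {x} := by
      intro x B hB y hy
      simp only [Finset.mem_filter, Finset.mem_insert] at hy
      rcases hy.1 with rfl | hyB
      · simp
      · exfalso
        have := hB hyB
        simp [hT] at this
        omega
    have hmaps : ∀ B ∈ T.powerset, f B ∈ H.filter (fun e => v ∈ e) := by
      intro B hB
      rw [Finset.mem_powerset] at hB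
      rw [Finset.mem_filter]
      constructor
      · rw [hmemH]
        by_cases hvB : v ∈ B
        · have := Finset.card_le_card (hsub w B hB)
          simp only [hf, if_pos hvB]
          simpa using this
        · have := Finset.card_le_card (hsub v B hB)
          simp only [hf, if_neg hvB]
          simpa using this
      · by_cases hvB : v ∈ B <;> simp [hf, hvB]
    have hinj : Set.InjOn f (T.powerset : Set (Finset (Fin n))) := by
      intro B hB C hC hBC
      simp only [Finset.coe_powerset, Set.mem_preimage, Set.mem_powerset_iff,
        Finset.coe_subset] at hB hC
      have hwB : w ∉ B := fun h => hwT (hB h)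
      have hwC : w ∉ C := fun h => hwT (hC h)
      have hvw : v ≠ w := by
        intro h; rw [h] at hv; exact hv hwm
      by_cases hvB : v ∈ B <;> by_cases hvC : v ∈ C
      · simp only [hf, if_pos hvB, if_pos hvC] at hBC
        rw [← Finset.erase_insert hwB, ← Finset.erase_insert hwC, hBC]
      · exfalso
        simp only [hf, if_pos hvB, if_neg hvC] at hBC
        have : w ∈ insert v C := hBC ▸ Finset.mem_insert_self w B
        rcases Finset.mem_insert.mp this with h | h
        · exact hvw h.symm
        · exact hwC h
      · exfalso
        simp only [hf, if_neg hvB, if_pos hvC] at hBC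
        have : w ∈ insert v B := hBC ▸ Finset.mem_insert_self w C
        rcases Finset.mem_insert.mp this with h | h
        · exact hvw h.symm
        · exact hwB h
      · simp only [hf, if_neg hvB, if_neg hvC] at hBC
        rw [← Finset.erase_insert hvB, ← Finset.erase_insert hvC, hBC]
    have hstep := Finset.card_le_card_of_injOn f hmaps hinj
    rw [Finset.card_powerset, hTcard] at hstep
    exact hstep
  refine ⟨?_, ?_, ?_⟩
  · intro v
    rw [hk2]
    by_cases hv : (v : ℕ) < m
    · exact (deg_eq v hv).ge
    · exact deg_ge v hv
  · have h3 : 0 < n := by omega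
    refine ⟨⟨0, h3⟩, ?_⟩
    rw [hk2]
    exact deg_eq _ (show (0 : ℕ) < m by omega)
  · rintro ⟨vv, ee, ⟨hvinj, hvsurj⟩, heinj, heH, hcyc⟩
    have hN : Fintype.card (Fin n) = n := Fintype.card_fin n
    set sh : Fin (Fintype.card (Fin n)) → Fin (Fintype.card (Fin n)) :=
      fun i => ⟨(i.1 + 1) % Fintype.card (Fin n), Nat.mod_lt _ i.pos⟩ with hsh
    have hshmod : ∀ a : ℕ, a < Fintype.card (Fin n) → (a + 1) % Fintype.card (Fin n) =
        if a + 1 = Fintype.card (Fin n) then 0 else a + 1 := by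
      intro a ha
      split
      · next h => rw [h, Nat.mod_self]
      · next h => exact Nat.mod_eq_of_lt (by omega)
    have hshinj : Function.Injective sh := by
      intro a b hab
      have h := congrArg Fin.val hab
      simp only [hsh] at h
      have ha := a.isLt
      have hb := b.isLt
      rw [hshmod a.1 ha, hshmod b.1 hb] at h
      apply Fin.ext
      split at h <;> split at h <;> omega
    have hScard : ((Finset.univ : Finset (Fin n)).filter (fun x : Fin n => (x : ℕ) < m)).card
        = k + 1 := by
      have hE : (Finset.univ : Finset (Fin n)).filter (fun x : Fin n => (x : ℕ) < m)
          = Finset.Iio (⟨m, by omega⟩ : Fin n) := by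
        ext i
        simp [Fin.lt_def]
      rw [hE, Fin.card_Iio]
      simp
      omega
    set P : Finset (Fin (Fintype.card (Fin n))) := Finset.univ.filter (fun i => ((vv i : Fin n) : ℕ) < m) with hP
    have hPcard : P.card = k + 1 := by
      rw [← hScard]
      apply Finset.card_nbij (fun i => vv i)
      · intro a ha
        simp only [hP, Finset.mem_coe, Finset.mem_filter, Finset.mem_univ, true_and] at ha ⊢
        exact ha
      · exact hvinj.injOn
      · intro x hx
        simp only [Finset.coe_filter, Finset.mem_univ, true_and, Set.mem_setOf_eq] at hx
        obtain ⟨i, rfl⟩ := hvsurj x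
        exact ⟨i, by simp [hP, hx], rfl⟩
    set Q : Finset (Fin (Fintype.card (Fin n))) := P.image sh with hQ
    have hQcard : Q.card = k + 1 := by
      rw [hQ, Finset.card_image_of_injective _ hshinj, hPcard]
    have hPQu : (P ∪ Q).card ≤ Fintype.card (Fin n) := by
      have := Finset.card_le_univ (P ∪ Q)
      simpa using this
    have hPQi := Finset.card_inter_add_card_union P Q
    have hpos : 0 < (P ∩ Q).card := by omega
    obtain ⟨j, hj⟩ := Finset.card_pos.mp hpos
    rw [Finset.mem_inter] at hj
    obtain ⟨i, hiP, hij⟩ := Finset.mem_image.mp hj.2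
    have h1 : (vv j : ℕ) < m := (Finset.mem_filter.mp hj.1).2
    have h2 : (vv i : ℕ) < m := (Finset.mem_filter.mp hiP).2
    have hne : i ≠ j := by
      intro h
      rw [← h] at hij
      have hval := congrArg Fin.val hij
      simp only [hsh] at hval
      rw [hshmod i.1 i.isLt] at hval
      split at hval <;> omega
    have hvij : vv i ≠ vv j := fun h => hne (hvinj h)
    have hmem2 : vv (sh i) ∈ ee i := (hcyc i).2
    rw [hij] at hmem2
    have hmem1 : vv i ∈ ee i := (hcyc i).1
    have hEi := heH i
    rw [hmemH] at hEi
    have hsub : ({vv i, vv j} : Finset (Fin n)) ⊆ (ee i).filter (fun x : Fin n => (x : ℕ) < m) := by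
      intro y hy
      simp only [Finset.mem_insert, Finset.mem_singleton] at hy
      rcases hy with rfl | rfl <;> simp [Finset.mem_filter, hmem1, hmem2, h1, h2]
    have h2c : ({vv i, vv j} : Finset (Fin n)).card = 2 := Finset.card_pair hvij
    have := Finset.card_le_card hsub
    omega
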